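/- Let p be a prime and k ≥ 1, and let δ : ℤ/p^kℤ → (ℤ/pℤ)^k send each element to the sequence of base-p digits of its canonical representative in {0,…,p^k−1}. For every integer T ≥ 1 and every index i with 0 ≤ i ≤ k−1, there exists a polynomial Q_i over ℤ/pℤ in the T·k variables y_{t,j} (1 ≤ t ≤ T, 0 ≤ j ≤ k−1) of total degree at most (2p−2)^i, such that for all a₁,…,a_T ∈ ℤ/p^kℤ, the i-th base-p digit of the sum a₁+⋯+a_T (computed in ℤ/p^kℤ) equals the evaluation of Q_i at the values y_{t,j} = (j-th base-p digit of a_t). -/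

import Mathlib

lemma aux_mod_pow_eq_sum (p : ℕ) (n : ℕ) :
    ∀ k, n % p ^ k = ∑ j ∈ Finset.range k, (n / p ^ j % p) * p ^ j := by
  intro k
  induction k with
  | zero => simp [Nat.mod_one]
  | succ k ih =>
    rw [Finset.sum_range_succ, ← ih]
    have h1 : n % p ^ (k + 1) / p ^ k = n / p ^ k % p := by
      rw [pow_succ]
      exact Nat.mod_mul_right_div_self n (p ^ k) p
    have h2 : n % p ^ (k + 1) % p ^ k = n % p ^ k :=
      Nat.mod_mod_of_dvd n (pow_dvd_pow p (Nat.le_succ k))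
    have h3 := Nat.div_add_mod (n % p ^ (k + 1)) (p ^ k)
    rw [h1, h2, Nat.mul_comm (p ^ k)] at h3
    omega

lemma aux_mod_div_mod (p : ℕ) (hp : 1 < p) {i k : ℕ} (hik : i < k) (N : ℕ) :
    N % p ^ k / p ^ i % p = N / p ^ i % p := by
  have hpos : 0 < p ^ i := pow_pos (by omega) i
  have hsplit : p ^ k = p ^ i * p ^ (k - i) := by
    rw [← pow_add]; congr 1; omega
  conv_rhs => rw [← Nat.div_add_mod N (p ^ k)]
  rw [hsplit, mul_assoc, Nat.mul_add_div hpos]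
  rw [show p ^ (k - i) = p * p ^ (k - i - 1) by rw [← pow_succ']; congr 1; omega]
  rw [mul_assoc, Nat.mul_add_mod]

lemma aux_prod_descPochhammer {R : Type*} [CommRing R] (x : R) (u : ℕ) :
    ∏ m ∈ Finset.range u, (x - (m : R)) = (descPochhammer R u).eval x := by
  induction u with
  | zero => simp
  | succ u ih =>
    rw [Finset.prod_range_succ, ih, descPochhammer_succ_right]
    simp [mul_comm]

lemma aux_lucas_digit (p : ℕ) [Fact p.Prime] (n i : ℕ) :
    ((n.choose (p ^ i) : ℕ) : ZMod p) = ((n / p ^ i % p : ℕ) : ZMod p) := by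
  have hp : p.Prime := Fact.out
  have h := Choose.choose_modEq_choose_mul_prod_range_choose (n := n) (k := p ^ i) (p := p) (i + 1)
  have h2 : ((n.choose (p ^ i) : ℤ) : ZMod p)
      = ((Nat.choose (n / p ^ (i+1)) (p ^ i / p ^ (i+1)) *
          ∏ j ∈ Finset.range (i+1), Nat.choose (n / p ^ j % p) (p ^ i / p ^ j % p) : ℤ) : ZMod p) :=
    (ZMod.intCast_eq_intCast_iff _ _ _).mpr h
  push_cast at h2
  rw [h2]
  have hz : p ^ i / p ^ (i + 1) = 0 :=
    Nat.div_eq_of_lt (Nat.pow_lt_pow_right hp.one_lt (Nat.lt_succ_self i))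
  rw [hz, Nat.choose_zero_right, Finset.prod_range_succ]
  have hones : ∀ j ∈ Finset.range i,
      ((Nat.choose (n / p ^ j % p) (p ^ i / p ^ j % p) : ℕ) : ZMod p) = 1 := by
    intro j hj
    rw [Finset.mem_range] at hj
    have he : p ^ (i - j) = p ^ (i - j - 1) * p := by
      rw [← pow_succ]; congr 1; omega
    have : p ^ i / p ^ j % p = 0 := by
      rw [Nat.pow_div hj.le hp.pos, he, Nat.mul_mod_left]
    rw [this, Nat.choose_zero_right, Nat.cast_one]
  rw [Finset.prod_congr rfl hones, Finset.prod_const_one]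
  have : p ^ i / p ^ i % p = 1 := by
    rw [Nat.div_self (pow_pos hp.pos i), Nat.mod_eq_of_lt hp.one_lt]
  rw [this, Nat.choose_one_right]
  push_cast
  ring

lemma aux_coeff_prod_le {σ ι R : Type*} [CommRing R] (s : Finset ι)
    (G : ι → Polynomial (MvPolynomial σ R))
    (h : ∀ v ∈ s, ∀ m, ((G v).coeff m).totalDegree ≤ m) :
    ∀ m, ((∏ v ∈ s, G v).coeff m).totalDegree ≤ m := by
  classical
  induction s using Finset.induction with
  | empty =>
    intro m
    rw [Finset.prod_empty, Polynomial.coeff_one]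
    split_ifs <;> simp
  | @insert x s hx ih =>
    intro m
    rw [Finset.prod_insert hx, Polynomial.coeff_mul]
    refine le_trans (MvPolynomial.totalDegree_finset_sum _ _) (Finset.sup_le ?_)
    intro ab hab
    rw [Finset.HasAntidiagonal.mem_antidiagonal] at hab
    calc ((G x).coeff ab.1 * (∏ v ∈ s, G v).coeff ab.2).totalDegree
        ≤ ((G x).coeff ab.1).totalDegree + ((∏ v ∈ s, G v).coeff ab.2).totalDegree :=
          MvPolynomial.totalDegree_mul _ _
      _ ≤ ab.1 + ab.2 := add_le_add (h x (Finset.mem_insert_self _ _) _)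
          (ih (fun v hv => h v (Finset.mem_insert_of_mem hv)) _)
      _ = m := hab

/-- The `i`-th base-`p` digit of the canonical representative of `x : ZMod (p ^ k)`,
as an element of `ZMod p`. -/
def baseDigit (p k : ℕ) (i : ℕ) (x : ZMod (p ^ k)) : ZMod p :=
  (((x.val / p ^ i) % p : ℕ) : ZMod p)

theorem stmt_9 (p : ℕ) (hp : p.Prime) (k : ℕ) (hk : 1 ≤ k) (T : ℕ) (hT : 1 ≤ T)
    (i : ℕ) (hi : i < k) :
    ∃ Q : MvPolynomial (Fin T × Fin k) (ZMod p),
      Q.totalDegree ≤ (2 * p - 2) ^ i ∧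
        ∀ a : Fin T → ZMod (p ^ k),
          baseDigit p k i (∑ t, a t) =
            MvPolynomial.eval (fun v => baseDigit p k (v.2 : ℕ) (a v.1)) Q := by
  haveI : Fact p.Prime := ⟨hp⟩
  haveI : NeZero (p ^ k) := ⟨pow_ne_zero k hp.pos.ne'⟩
  classical
  set B : Fin T × Fin k → ℕ → MvPolynomial (Fin T × Fin k) (ZMod p) := fun v u =>
    MvPolynomial.C ((u.factorial : ZMod p))⁻¹ *
      ∏ m ∈ Finset.range u, (MvPolynomial.X v - MvPolynomial.C (m : ZMod p)) with hBdef
  set G : Fin T × Fin k → Polynomial (MvPolynomial (Fin T × Fin k) (ZMod p)) := fun v =>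
    ∑ u ∈ Finset.range p, Polynomial.C (B v u) * Polynomial.X ^ (u * p ^ (v.2 : ℕ)) with hGdef
  have hB : ∀ v u, (B v u).totalDegree ≤ u := by
    intro v u
    refine le_trans (MvPolynomial.totalDegree_mul _ _) ?_
    rw [MvPolynomial.totalDegree_C, zero_add]
    refine le_trans (MvPolynomial.totalDegree_finset_prod _ _) ?_
    calc ∑ m ∈ Finset.range u, (MvPolynomial.X v - MvPolynomial.C (m : ZMod p)).totalDegree
        ≤ ∑ _m ∈ Finset.range u, 1 := by
          refine Finset.sum_le_sum fun m _ => ?_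
          rw [sub_eq_add_neg, ← MvPolynomial.C_neg]
          refine le_trans (MvPolynomial.totalDegree_add _ _) (max_le ?_ ?_)
          · exact le_of_eq (MvPolynomial.totalDegree_X v)
          · rw [MvPolynomial.totalDegree_C]; omega
      _ = u := by simp
  have hGcoeff : ∀ v m, ((G v).coeff m).totalDegree ≤ m := by
    intro v m
    rw [hGdef]
    simp only
    rw [Polynomial.finset_sum_coeff]
    refine le_trans (MvPolynomial.totalDegree_finset_sum _ _) (Finset.sup_le ?_)
    intro u _
    rw [Polynomial.coeff_C_mul, Polynomial.coeff_X_pow]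
    split_ifs with hm
    · rw [mul_one]
      refine le_trans (hB v u) ?_
      rw [hm]
      exact Nat.le_mul_of_pos_right u (pow_pos hp.pos _)
    · rw [mul_zero]
      simp
  refine ⟨(∏ v, G v).coeff (p ^ i), ?_, ?_⟩
  · refine le_trans (aux_coeff_prod_le _ G (fun v _ => hGcoeff v) (p ^ i)) ?_
    exact Nat.pow_le_pow_left (by have := hp.two_le; omega) i
  intro a
  set d : Fin T × Fin k → ℕ := fun v => (a v.1).val / p ^ (v.2 : ℕ) % p with hddef
  have hdlt : ∀ v, d v < p := fun v => Nat.mod_lt _ hp.pos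
  set N : ℕ := ∑ t, (a t).val with hNdef
  have hsumN : ∑ v : Fin T × Fin k, d v * p ^ (v.2 : ℕ) = N := by
    rw [Fintype.sum_prod_type, hNdef]
    refine Finset.sum_congr rfl fun t _ => ?_
    rw [Fin.sum_univ_eq_sum_range (fun j => (a t).val / p ^ j % p * p ^ j) k]
    rw [← aux_mod_pow_eq_sum]
    exact Nat.mod_eq_of_lt (ZMod.val_lt _)
  have hpt : (fun v : Fin T × Fin k => baseDigit p k (v.2 : ℕ) (a v.1))
      = fun v => ((d v : ℕ) : ZMod p) := rfl
  rw [hpt]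
  have key : MvPolynomial.eval (fun v => ((d v : ℕ) : ZMod p)) ((∏ v, G v).coeff (p ^ i))
      = ((N.choose (p ^ i) : ℕ) : ZMod p) := by
    rw [← Polynomial.coeff_map]
    have hGv : ∀ v : Fin T × Fin k,
        Polynomial.map (MvPolynomial.eval fun v => ((d v : ℕ) : ZMod p)) (G v)
          = (1 + Polynomial.X) ^ (d v * p ^ (v.2 : ℕ)) := by
      intro v
      have hevB : ∀ u, (MvPolynomial.eval fun v => ((d v : ℕ) : ZMod p)) (B v u)
          = (((u.factorial : ℕ) : ZMod p))⁻¹ * (((d v).descFactorial u : ℕ) : ZMod p) := by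
        intro u
        rw [hBdef]
        simp only [map_mul, MvPolynomial.eval_C, map_prod, map_sub, MvPolynomial.eval_X,
          MvPolynomial.eval_C]
        rw [aux_prod_descPochhammer, descPochhammer_eval_eq_descFactorial]
      have hfact : ∀ u < p, ((u.factorial : ℕ) : ZMod p) ≠ 0 := by
        intro u hu h0
        rw [ZMod.natCast_eq_zero_iff] at h0
        exact absurd ((Nat.Prime.dvd_factorial hp).mp h0) (by omega)
      have hchoose : ∀ u < p, (MvPolynomial.eval fun v => ((d v : ℕ) : ZMod p)) (B v u)
          = (((d v).choose u : ℕ) : ZMod p) := by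
        intro u hu
        rw [hevB u, Nat.descFactorial_eq_factorial_mul_choose, Nat.cast_mul,
          inv_mul_cancel_left₀ (hfact u hu)]
      rw [hGdef]
      simp only [Polynomial.map_sum, Polynomial.map_mul, Polynomial.map_C, Polynomial.map_pow,
        Polynomial.map_X]
      rw [Finset.sum_congr rfl fun u hu => by
        rw [hchoose u (Finset.mem_range.mp hu)]]
      have hpow : (1 + Polynomial.X : Polynomial (ZMod p)) ^ (d v * p ^ (v.2 : ℕ))
          = ∑ u ∈ Finset.range (d v + 1),
              Polynomial.C (((d v).choose u : ℕ) : ZMod p) * Polynomial.X ^ (u * p ^ (v.2 : ℕ)) := by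
        rw [mul_comm (d v), pow_mul, add_pow_char_pow, one_pow, add_comm, add_pow]
        refine Finset.sum_congr rfl fun u hu => ?_
        rw [one_pow, mul_one, ← pow_mul, mul_comm (p ^ (v.2 : ℕ)) u, map_natCast]; ring
      rw [hpow]
      refine (Finset.sum_subset (Finset.range_subset_range.mpr (hdlt v)) ?_).symm
      intro u _ hu
      rw [Finset.mem_range, not_lt] at hu
      rw [Nat.choose_eq_zero_of_lt (by omega), Nat.cast_zero, map_zero, zero_mul]
    rw [Polynomial.map_prod, Finset.prod_congr rfl fun v _ => hGv v,
      Finset.prod_pow_eq_pow_sum, hsumN, add_comm, Polynomial.coeff_X_add_one_pow]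
  rw [key, aux_lucas_digit]
  have hval : (∑ t, a t).val = N % p ^ k := by
    have hcast : (∑ t, a t) = ((N : ℕ) : ZMod (p ^ k)) := by
      rw [hNdef, Nat.cast_sum]
      exact Finset.sum_congr rfl fun t _ => (ZMod.natCast_rightInverse (a t)).symm
    rw [hcast, ZMod.val_natCast]
  show ((((∑ t, a t).val / p ^ i) % p : ℕ) : ZMod p) = _
  rw [hval, aux_mod_div_mod p hp.one_lt hi N]
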